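/- arXiv:1709.02300 — 5 statements merged into one kernel-verified Lean document; each statement's English description precedes it below -/
import Mathlib

section
/- The sequence (θ_k) defined by θ_0 = 1 and θ_{k+1} = (√(θ_k⁴ + 4θ_k²) − θ_k²)/2 satisfies 1/(k+1) ≤ θ_k ≤ 2/(k+2) for all k ≥ 0. -/
theorem stmt_1 (θ : ℕ → ℝ) (h0 : θ 0 = 1)
    (hrec : ∀ k, θ (k + 1) = (Real.sqrt ((θ k) ^ 4 + 4 * (θ k) ^ 2) - (θ k) ^ 2) / 2) :
    ∀ k : ℕ, 1 / (k + 1 : ℝ) ≤ θ k ∧ θ k ≤ 2 / (k + 2 : ℝ) := by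
  have key : ∀ k, 0 ≤ θ k →
      0 ≤ θ (k+1) ∧ (θ (k+1))^2 + (θ k)^2 * θ (k+1) = (θ k)^2 := by
    intro k hk
    have hnn : (0:ℝ) ≤ (θ k)^4 + 4*(θ k)^2 := by positivity
    have hs : Real.sqrt ((θ k)^4 + 4*(θ k)^2) ^ 2 = (θ k)^4 + 4*(θ k)^2 :=
      Real.sq_sqrt hnn
    have hge : (θ k)^2 ≤ Real.sqrt ((θ k)^4 + 4*(θ k)^2) := by
      have h1 : (θ k)^2 = Real.sqrt (((θ k)^2)^2) := (Real.sqrt_sq (by positivity)).symm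
      rw [h1]
      exact Real.sqrt_le_sqrt (by nlinarith)
    constructor
    · rw [hrec k]; linarith
    · rw [hrec k]; nlinarith [hs]
  intro k
  induction k with
  | zero => constructor <;> rw [h0] <;> norm_num
  | succ n ih =>
    obtain ⟨hl, hu⟩ := ih
    have hn1 : (0:ℝ) < (n:ℝ)+1 := by positivity
    have hn2 : (0:ℝ) < (n:ℝ)+2 := by positivity
    have hn3 : (0:ℝ) < (n:ℝ)+3 := by positivity
    have hpos : 0 < θ n := lt_of_lt_of_le (by positivity) hl
    obtain ⟨hu0, heq⟩ := key n hpos.le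
    set t := θ n with ht
    set u := θ (n+1) with hud
    have ht2 : 1 ≤ t^2 * ((n:ℝ)+1)^2 := by
      have := (div_le_iff₀ hn1).mp hl
      nlinarith
    have ht2' : t^2 * ((n:ℝ)+2)^2 ≤ 4 := by
      have h := (le_div_iff₀ hn2).mp hu
      have h2 := mul_le_mul h h (mul_nonneg hpos.le hn2.le) (by norm_num : (0:ℝ) ≤ 2)
      nlinarith
    set s : ℝ := 1 / ((n:ℝ)+2) with hsdef
    set s' : ℝ := 2 / ((n:ℝ)+3) with hs'def
    have hspos : 0 < s := by positivity
    have hs'pos : 0 < s' := by positivity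
    have hn0 : (0:ℝ) ≤ (n:ℝ) := Nat.cast_nonneg n
    have hg : s^2 + t^2 * s ≤ t^2 := by
      have hgm : 1 + t^2*((n:ℝ)+2) ≤ t^2*((n:ℝ)+2)^2 := by
        nlinarith [mul_nonneg (sq_nonneg t) hn0]
      have e1 : (s^2 + t^2*s) * ((n:ℝ)+2)^2 = 1 + t^2*((n:ℝ)+2) := by
        rw [hsdef]; field_simp
      have e2 : (s^2 + t^2*s) * ((n:ℝ)+2)^2 ≤ t^2 * ((n:ℝ)+2)^2 := by
        rw [e1]; exact hgm
      exact le_of_mul_le_mul_right e2 (by positivity)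
    have hg' : t^2 ≤ s'^2 + t^2 * s' := by
      have hgm : t^2*((n:ℝ)+3)^2 ≤ 4 + 2*t^2*((n:ℝ)+3) := by
        nlinarith [mul_nonneg (sq_nonneg t) hn0]
      have e1 : (s'^2 + t^2*s') * ((n:ℝ)+3)^2 = 4 + 2*t^2*((n:ℝ)+3) := by
        rw [hs'def]; field_simp; ring
      have e2 : t^2 * ((n:ℝ)+3)^2 ≤ (s'^2 + t^2*s') * ((n:ℝ)+3)^2 := by
        rw [e1]; exact hgm
      exact le_of_mul_le_mul_right e2 (by positivity)
    constructor
    · -- 1/(n+1+1) ≤ u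
      have hcast : ((n+1 : ℕ) : ℝ) + 1 = (n:ℝ) + 2 := by push_cast; ring
      rw [hcast]
      show s ≤ u
      by_contra h
      push_neg at h
      have h1 : u^2 < s^2 := by nlinarith
      have h2 : t^2 * u ≤ t^2 * s := mul_le_mul_of_nonneg_left h.le (sq_nonneg t)
      linarith
    · -- u ≤ 2/(n+1+2)
      have hcast : ((n+1 : ℕ) : ℝ) + 2 = (n:ℝ) + 3 := by push_cast; ring
      rw [hcast]
      show u ≤ s'
      by_contra h
      push_neg at h
      have h1 : s'^2 < u^2 := by nlinarith
      have h2 : t^2 * s' < t^2 * u := by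
        apply mul_lt_mul_of_pos_left h (by positivity)
      linarith
end

section
/- Under the smoothness assumption f(x) ≤ f(y) + ⟨∇f(y), x−y⟩ + (1/2)‖x−y‖²_L and the quadratic growth condition F(x) ≥ F⋆ + (μ/2)·dist_L(x, X⋆)² on [F ≤ F(x₀)], the proximal gradient mapping T satisfies the error bound dist_L(T(x), X⋆) ≤ (4/μ)·‖x − T(x)‖_L for every x with F(x) ≤ F(x₀). -/
open scoped RealInnerProductSpace

/-- Distance to a set in the weighted Euclidean norm `‖u‖_L = √(∑ i, L i * u i ^ 2)`. -/
noncomputable def distL {n : ℕ} (L : Fin n → ℝ) (x : EuclideanSpace ℝ (Fin n))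
    (S : Set (EuclideanSpace ℝ (Fin n))) : ℝ :=
  ⨅ y : S, Real.sqrt (∑ i, L i * (x i - (y : EuclideanSpace ℝ (Fin n)) i) ^ 2)

lemma innerE {n : ℕ} (u v : EuclideanSpace ℝ (Fin n)) : ⟪u, v⟫ = ∑ i, u i * v i := by
  simp [PiLp.inner_apply, RCLike.inner_apply, conj_trivial]
  exact Finset.sum_congr rfl fun i _ => mul_comm _ _

lemma grad_ineq {n : ℕ} (f : EuclideanSpace ℝ (Fin n) → ℝ)
    (f' : EuclideanSpace ℝ (Fin n) → EuclideanSpace ℝ (Fin n))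
    (hf' : ∀ x, HasGradientAt f (f' x) x) (hfconv : ConvexOn ℝ Set.univ f)
    (a b : EuclideanSpace ℝ (Fin n)) : f a + ⟪f' a, b - a⟫ ≤ f b := by
  have hc : HasDerivAt (fun t : ℝ => a + t • (b - a)) (b - a) 0 := by
    simpa using ((hasDerivAt_id (0:ℝ)).smul_const (b - a)).const_add a
  have hfd := (hasGradientAt_iff_hasFDerivAt.mp (hf' a))
  have hfd' : HasFDerivAt f ((InnerProductSpace.toDual ℝ (EuclideanSpace ℝ (Fin n))) (f' a))
      (a + (0:ℝ) • (b - a)) := by simpa using hfd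
  have hg : HasDerivAt (fun t : ℝ => f (a + t • (b - a))) ⟪f' a, b - a⟫ 0 := by
    have := hfd'.comp_hasDerivAt 0 hc
    simpa [InnerProductSpace.toDual_apply_apply, Function.comp_def] using this
  have hconv : ConvexOn ℝ Set.univ (fun t : ℝ => f (a + t • (b - a))) := by
    have := hfconv.comp_affineMap (AffineMap.lineMap a b)
    simp only [Set.preimage_univ] at this
    refine this.congr fun t _ => ?_
    simp [AffineMap.lineMap_apply, add_comm]
  have h := hconv.le_slope_of_hasDerivAt (Set.mem_univ (0:ℝ)) (Set.mem_univ (1:ℝ)) one_pos hg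
  rw [slope_def_field] at h
  simp only [one_smul, zero_smul, add_zero, add_sub_cancel, sub_zero, div_one] at h
  linarith

/-- Weighted Cauchy-Schwarz. -/
lemma csw {n : ℕ} (L : Fin n → ℝ) (hL : ∀ i, 0 < L i) (u v : Fin n → ℝ) :
    ∑ i, L i * (u i * v i)
      ≤ Real.sqrt (∑ i, L i * u i ^ 2) * Real.sqrt (∑ i, L i * v i ^ 2) := by
  have h := Real.sum_mul_le_sqrt_mul_sqrt Finset.univ
    (fun i => Real.sqrt (L i) * u i) (fun i => Real.sqrt (L i) * v i)
  have e1 : ∀ i, (Real.sqrt (L i) * u i) * (Real.sqrt (L i) * v i) = L i * (u i * v i) := by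
    intro i
    have h0 : Real.sqrt (L i) * Real.sqrt (L i) = L i := Real.mul_self_sqrt (hL i).le
    rw [show Real.sqrt (L i) * u i * (Real.sqrt (L i) * v i)
      = (Real.sqrt (L i) * Real.sqrt (L i)) * (u i * v i) from by ring, h0]
  have e2 : ∀ (w : Fin n → ℝ) i, (Real.sqrt (L i) * w i) ^ 2 = L i * w i ^ 2 := by
    intro w i
    rw [mul_pow, Real.sq_sqrt (hL i).le]
  rw [Finset.sum_congr rfl (fun i _ => e1 i),
      Finset.sum_congr rfl (fun i _ => e2 u i),
      Finset.sum_congr rfl (fun i _ => e2 v i)] at h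
  exact h

/-- Inverse-weighted Cauchy-Schwarz. -/
lemma csinv {n : ℕ} (L : Fin n → ℝ) (hL : ∀ i, 0 < L i) (w v : Fin n → ℝ) :
    ∑ i, w i * v i
      ≤ Real.sqrt (∑ i, w i ^ 2 / L i) * Real.sqrt (∑ i, L i * v i ^ 2) := by
  have h := Real.sum_mul_le_sqrt_mul_sqrt Finset.univ
    (fun i => w i / Real.sqrt (L i)) (fun i => Real.sqrt (L i) * v i)
  have hs : ∀ i, (0:ℝ) < Real.sqrt (L i) := fun i => Real.sqrt_pos.mpr (hL i)
  have e1 : ∀ i, (w i / Real.sqrt (L i)) * (Real.sqrt (L i) * v i) = w i * v i := by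
    intro i
    rw [div_mul_eq_mul_div, mul_div_assoc, mul_comm (Real.sqrt (L i)) (v i), mul_div_assoc,
      div_self (hs i).ne', mul_one]
  have e2 : ∀ i, (w i / Real.sqrt (L i)) ^ 2 = w i ^ 2 / L i := by
    intro i; rw [div_pow, Real.sq_sqrt (hL i).le]
  have e3 : ∀ i, (Real.sqrt (L i) * v i) ^ 2 = L i * v i ^ 2 := by
    intro i; rw [mul_pow, Real.sq_sqrt (hL i).le]
  rw [Finset.sum_congr rfl (fun i _ => e1 i),
      Finset.sum_congr rfl (fun i _ => e2 i),
      Finset.sum_congr rfl (fun i _ => e3 i)] at h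
  exact h

/-- Half of cocoercivity: lower quadratic bound with gradient difference. -/
lemma coco_half {n : ℕ} (L : Fin n → ℝ) (hL : ∀ i, 0 < L i)
    (f : EuclideanSpace ℝ (Fin n) → ℝ)
    (f' : EuclideanSpace ℝ (Fin n) → EuclideanSpace ℝ (Fin n))
    (hf' : ∀ x, HasGradientAt f (f' x) x) (hfconv : ConvexOn ℝ Set.univ f)
    (hsmooth : ∀ x y, f x ≤ f y + ⟪f' y, x - y⟫ + (1 / 2) * ∑ i, L i * (x i - y i) ^ 2)
    (a b : EuclideanSpace ℝ (Fin n)) :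
    f a + ⟪f' a, b - a⟫ + (1/2) * ∑ i, (f' b i - f' a i) ^ 2 / L i ≤ f b := by
  set δ : EuclideanSpace ℝ (Fin n) :=
    (WithLp.equiv 2 (Fin n → ℝ)).symm (fun i => (f' b i - f' a i) / L i) with hδ
  have hδi : ∀ i, δ i = (f' b i - f' a i) / L i := fun i => rfl
  set z : EuclideanSpace ℝ (Fin n) := b - δ with hz
  have hzi : ∀ i, z i = b i - (f' b i - f' a i) / L i := by
    intro i; simp [hz, hδi i]
  have h1 := grad_ineq f f' hf' hfconv a z
  have h2 := hsmooth z b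
  -- rewrite inner products as sums
  rw [innerE] at h1 h2 ⊢
  have e2 : ∑ i, L i * (z i - b i) ^ 2 = ∑ i, (f' b i - f' a i) ^ 2 / L i := by
    refine Finset.sum_congr rfl fun i _ => ?_
    rw [hzi i]
    field_simp [(hL i).ne']
    ring
  rw [e2] at h2
  have e3 : ∑ i, f' b i * (z i - b i)
      = -∑ i, f' b i * ((f' b i - f' a i) / L i) := by
    rw [← Finset.sum_neg_distrib]
    refine Finset.sum_congr rfl fun i _ => ?_
    rw [hzi i]; ring
  have e4 : ∑ i, f' a i * (z i - a i)
      = (∑ i, f' a i * (b i - a i)) - ∑ i, f' a i * ((f' b i - f' a i) / L i) := by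
    rw [← Finset.sum_sub_distrib]
    refine Finset.sum_congr rfl fun i _ => ?_
    simp only [PiLp.sub_apply]
    rw [hzi i]; ring
  have e5 : (∑ i, f' b i * ((f' b i - f' a i) / L i))
      - ∑ i, f' a i * ((f' b i - f' a i) / L i) = ∑ i, (f' b i - f' a i) ^ 2 / L i := by
    rw [← Finset.sum_sub_distrib]
    refine Finset.sum_congr rfl fun i _ => ?_
    field_simp [(hL i).ne']
  simp only [PiLp.sub_apply] at h1 h2 ⊢
  rw [e4] at h1
  rw [e3] at h2
  linarith [h1, h2, e5]

theorem stmt_9 {n : ℕ} (L : Fin n → ℝ) (hL : ∀ i, 0 < L i)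
    (f : EuclideanSpace ℝ (Fin n) → ℝ) (f' : EuclideanSpace ℝ (Fin n) → EuclideanSpace ℝ (Fin n))
    (hf' : ∀ x, HasGradientAt f (f' x) x)
    (hfconv : ConvexOn ℝ Set.univ f)
    (hsmooth : ∀ x y, f x ≤ f y + ⟪f' y, x - y⟫ + (1 / 2) * ∑ i, L i * (x i - y i) ^ 2)
    (ψ : EuclideanSpace ℝ (Fin n) → ℝ) (hψ : ConvexOn ℝ Set.univ ψ)
    (F : EuclideanSpace ℝ (Fin n) → ℝ) (hF : ∀ x, F x = f x + ψ x)
    (Fstar : ℝ) (Xstar : Set (EuclideanSpace ℝ (Fin n)))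
    (hne : Xstar.Nonempty) (hXstar : Xstar = {x | F x = Fstar}) (hmin : ∀ x, Fstar ≤ F x)
    (x₀ : EuclideanSpace ℝ (Fin n)) (μ : ℝ) (hμ : 0 < μ)
    (hgrowth : ∀ x, F x ≤ F x₀ → Fstar + μ / 2 * (distL L x Xstar) ^ 2 ≤ F x)
    (T : EuclideanSpace ℝ (Fin n) → EuclideanSpace ℝ (Fin n))
    (hT : ∀ x y, ⟪f' x, T x - x⟫ + (1 / 2) * (∑ i, L i * (T x i - x i) ^ 2) + ψ (T x)
        ≤ ⟪f' x, y - x⟫ + (1 / 2) * (∑ i, L i * (y i - x i) ^ 2) + ψ y) :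
    ∀ x, F x ≤ F x₀ →
      distL L (T x) Xstar ≤ (4 / μ) * Real.sqrt (∑ i, L i * (x i - T x i) ^ 2) := by
  intro x hx₀
  haveI : Nonempty ↥Xstar := hne.to_subtype
  set p := T x with hp
  set s := Real.sqrt (∑ i, L i * (x i - p i) ^ 2) with hs
  have hs0 : 0 ≤ s := Real.sqrt_nonneg _
  -- descent: F p ≤ F x
  have hdesc : F p ≤ F x := by
    have h1 := hT x x
    rw [← hp] at h1
    have h2 := hsmooth p x
    rw [hF p, hF x]
    simp only [sub_self, inner_zero_right, ne_eq, OfNat.ofNat_ne_zero, not_false_eq_true,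
      zero_pow, mul_zero, Finset.sum_const_zero, zero_add] at h1
    linarith
  have hpx₀ : F p ≤ F x₀ := le_trans hdesc hx₀
  have hg := hgrowth p hpx₀
  set d := distL L p Xstar with hd
  have hd0 : 0 ≤ d := le_ciInf fun y => Real.sqrt_nonneg _
  -- ψ subgradient inequality at p
  have hψsub : ∀ y : EuclideanSpace ℝ (Fin n),
      0 ≤ (∑ i, f' x i * (y i - p i)) + (∑ i, L i * ((p i - x i) * (y i - p i)))
          + ψ y - ψ p := by
    intro y
    set C := ∑ i, L i * ((p i - x i) * (y i - p i)) with hC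
    set D := ∑ i, L i * (y i - p i) ^ 2 with hD
    have hD0 : 0 ≤ D := Finset.sum_nonneg fun i _ => mul_nonneg (hL i).le (sq_nonneg _)
    have key : ∀ t : ℝ, 0 < t → t ≤ 1 →
        0 ≤ (∑ i, f' x i * (y i - p i)) + C + ψ y - ψ p + t / 2 * D := by
      intro t ht0 ht1
      have h1 := hT x (p + t • (y - p))
      rw [← hp] at h1
      have hψc := hψ.2 (Set.mem_univ p) (Set.mem_univ y)
        (by linarith : (0:ℝ) ≤ 1 - t) ht0.le (by ring)
      have hpt : (1 - t) • p + t • y = p + t • (y - p) := by module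
      rw [hpt] at hψc
      simp only [smul_eq_mul] at hψc
      have e1 : ⟪f' x, p + t • (y - p) - x⟫ = ⟪f' x, p - x⟫ + t * ⟪f' x, y - p⟫ := by
        rw [show p + t • (y - p) - x = (p - x) + t • (y - p) by module,
          inner_add_right, real_inner_smul_right]
      have e2 : ∑ i, L i * ((p + t • (y - p)) i - x i) ^ 2
          = (∑ i, L i * (p i - x i) ^ 2) + 2 * t * C + t ^ 2 * D := by
        rw [hC, hD, Finset.mul_sum, Finset.mul_sum, ← Finset.sum_add_distrib,
          ← Finset.sum_add_distrib]
        refine Finset.sum_congr rfl fun i _ => ?_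
        simp only [PiLp.add_apply, PiLp.smul_apply, PiLp.sub_apply, smul_eq_mul]
        ring
      rw [e1, e2] at h1
      rw [innerE (f' x) (y - p)] at h1
      simp only [PiLp.sub_apply] at h1
      nlinarith [h1, hψc]
    by_contra hcon
    push_neg at hcon
    set A := (∑ i, f' x i * (y i - p i)) + C + ψ y - ψ p with hA
    rcases eq_or_lt_of_le hD0 with hDz | hDp
    · have := key 1 one_pos le_rfl
      rw [← hDz] at this
      simp at this
      linarith
    · have htpos : 0 < min 1 (-A / D) := by
        apply lt_min one_pos
        apply div_pos (by linarith) hDp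
      have := key (min 1 (-A / D)) htpos (min_le_left _ _)
      have hle : min 1 (-A / D) ≤ -A / D := min_le_right _ _
      have h6 : (min 1 (-A / D)) * D ≤ -A / D * D := mul_le_mul_of_nonneg_right hle hDp.le
      rw [div_mul_cancel₀ _ hDp.ne'] at h6
      linarith
  -- cocoercivity
  set w : Fin n → ℝ := fun i => f' p i - f' x i with hw
  set r2 := ∑ i, w i ^ 2 / L i with hr2
  have hr20 : 0 ≤ r2 := Finset.sum_nonneg fun i _ => div_nonneg (sq_nonneg _) (hL i).le
  have hcoco : r2 ≤ ∑ i, w i * (p i - x i) := by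
    have h1 := coco_half L hL f f' hf' hfconv hsmooth x p
    have h2 := coco_half L hL f f' hf' hfconv hsmooth p x
    rw [innerE] at h1 h2
    have e1 : ∑ i, (f' p i - f' x i) ^ 2 / L i = r2 := rfl
    have e2 : ∑ i, (f' x i - f' p i) ^ 2 / L i = r2 := by
      rw [hr2]
      exact Finset.sum_congr rfl fun i _ => by rw [hw]; ring_nf
    rw [e1] at h1
    rw [e2] at h2
    have e3 : (∑ i, f' x i * ((p - x) i)) + (∑ i, f' p i * ((x - p) i))
        = -∑ i, w i * (p i - x i) := by
      rw [← Finset.sum_add_distrib, ← Finset.sum_neg_distrib]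
      refine Finset.sum_congr rfl fun i _ => ?_
      simp only [PiLp.sub_apply, hw]
      ring
    linarith [h1, h2, e3.ge, e3.le]
  have hrs : Real.sqrt r2 ≤ s := by
    have hcs := csinv L hL w (fun i => p i - x i)
    have es : ∑ i, L i * (p i - x i) ^ 2 = ∑ i, L i * (x i - p i) ^ 2 :=
      Finset.sum_congr rfl fun i _ => by ring
    rw [es] at hcs
    have h := le_trans hcoco hcs
    rcases eq_or_lt_of_le (Real.sqrt_nonneg r2) with hz | hpos
    · rw [← hz]; exact hs0
    · have : Real.sqrt r2 * Real.sqrt r2 ≤ Real.sqrt r2 * s := by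
        rw [Real.mul_self_sqrt hr20]; exact h
      exact le_of_mul_le_mul_left this hpos
  -- main bound for each x⋆ ∈ Xstar
  have hbound : ∀ xs : EuclideanSpace ℝ (Fin n), xs ∈ Xstar →
      F p - Fstar ≤ 2 * s * Real.sqrt (∑ i, L i * (p i - xs i) ^ 2) := by
    intro xs hxs
    set q := Real.sqrt (∑ i, L i * (p i - xs i) ^ 2) with hq
    have hq0 : 0 ≤ q := Real.sqrt_nonneg _
    have hFxs : F xs = Fstar := by rw [hXstar] at hxs; exact hxs
    have hgi := grad_ineq f f' hf' hfconv p xs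
    rw [innerE] at hgi
    have hψs := hψsub xs
    -- t1 bound
    have ht1 : ∑ i, w i * (p i - xs i) ≤ s * q := by
      have := csinv L hL w (fun i => p i - xs i)
      rw [← hr2, ← hq] at this
      calc ∑ i, w i * (p i - xs i) ≤ Real.sqrt r2 * q := this
        _ ≤ s * q := mul_le_mul_of_nonneg_right hrs hq0
    -- t2 bound
    have ht2 : ∑ i, L i * ((x i - p i) * (p i - xs i)) ≤ s * q := by
      have := csw L hL (fun i => x i - p i) (fun i => p i - xs i)
      rw [← hs, ← hq] at this
      exact this
    -- combine
    have n1 : ∑ i, f' p i * ((xs - p) i) = -∑ i, f' p i * (p i - xs i) := by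
      rw [← Finset.sum_neg_distrib]
      exact Finset.sum_congr rfl fun i _ => by simp only [PiLp.sub_apply]; ring
    rw [n1] at hgi
    have n2 : ∑ i, f' x i * (xs i - p i) = -∑ i, f' x i * (p i - xs i) := by
      rw [← Finset.sum_neg_distrib]
      exact Finset.sum_congr rfl fun i _ => by ring
    rw [n2] at hψs
    have n3 : ∑ i, L i * ((p i - x i) * (xs i - p i))
        = ∑ i, L i * ((x i - p i) * (p i - xs i)) :=
      Finset.sum_congr rfl fun i _ => by ring
    rw [n3] at hψs
    have n4 : (∑ i, f' p i * (p i - xs i)) - ∑ i, f' x i * (p i - xs i)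
        = ∑ i, w i * (p i - xs i) := by
      rw [← Finset.sum_sub_distrib]
      exact Finset.sum_congr rfl fun i _ => by rw [hw]; ring
    rw [hF xs] at hFxs
    rw [hF p]
    linarith [hgi, hψs, ht1, ht2, n4.le, n4.ge, hFxs]
  -- infimum argument
  have hkey : ∀ ε : ℝ, 0 < ε → μ / 2 * d ^ 2 ≤ 2 * s * (d + ε) := by
    intro ε hε
    have hlt : distL L p Xstar < d + ε := by rw [← hd]; linarith
    unfold distL at hlt
    obtain ⟨y, hy⟩ := exists_lt_of_ciInf_lt hlt
    have hb := hbound y y.2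
    have hq0 : 0 ≤ Real.sqrt (∑ i, L i * (p i - (y : EuclideanSpace ℝ (Fin n)) i) ^ 2) :=
      Real.sqrt_nonneg _
    have : 2 * s * Real.sqrt (∑ i, L i * (p i - (y : EuclideanSpace ℝ (Fin n)) i) ^ 2)
        ≤ 2 * s * (d + ε) := by
      apply mul_le_mul_of_nonneg_left hy.le (by linarith)
    linarith [hg, hb, this]
  have hq : μ / 2 * d ^ 2 ≤ 2 * s * d := by
    refine le_of_forall_pos_le_add fun ε hε => ?_
    have := hkey (ε / (2 * s + 1)) (by positivity)
    set u := ε / (2 * s + 1) with hudef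
    have hu : (2 * s + 1) * u = ε := mul_div_cancel₀ ε (by positivity)
    have hu0 : 0 ≤ u := by rw [hudef]; positivity
    have h7 : 2 * s * u ≤ ε := by nlinarith [hu, hu0]
    have h8 : 2 * s * (d + u) = 2 * s * d + 2 * s * u := by ring
    linarith [this, h7, h8.le, h8.ge]
  -- conclude
  rcases eq_or_lt_of_le hd0 with hdz | hdp
  · rw [← hdz]
    positivity
  · rw [show (4 / μ) * s = (4 * s) / μ from by ring, le_div_iff₀ hμ]
    nlinarith [hq, hdp, hμ]
end

section
/- Under the same smoothness and quadratic growth assumptions, the proximal gradient mapping T satisfies F(T(x)) − F⋆ ≤ (8/μ)·‖x − T(x)‖²_L for every x with F(x) ≤ F(x₀). -/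
open scoped RealInnerProductSpace

private lemma convex_grad_ineq {n : ℕ} {f : EuclideanSpace ℝ (Fin n) → ℝ}
    (hconv : ConvexOn ℝ Set.univ f) {g x : EuclideanSpace ℝ (Fin n)}
    (hg : HasGradientAt f g x) (y : EuclideanSpace ℝ (Fin n)) :
    f x + ⟪g, y - x⟫ ≤ f y := by
  set φ : ℝ → ℝ := fun t => f (x + t • (y - x)) with hφ
  have hc : HasDerivAt (fun t : ℝ => x + t • (y - x)) (y - x) 0 := by
    simpa using ((hasDerivAt_id (0:ℝ)).smul_const (y - x)).const_add x
  have hg' : HasFDerivAt f (InnerProductSpace.toDual ℝ _ g) (x + (0:ℝ) • (y - x)) := by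
    simpa using hg.hasFDerivAt
  have hd : HasDerivAt φ ⟪g, y - x⟫ 0 := by
    simpa [InnerProductSpace.toDual_apply_apply, Function.comp_def, hφ] using hg'.comp_hasDerivAt 0 hc
  have hslope : Filter.Tendsto (slope φ 0) (nhdsWithin 0 (Set.Ioi 0)) (nhds ⟪g, y - x⟫) :=
    (hasDerivAt_iff_tendsto_slope.mp hd).mono_left
      (nhdsWithin_mono 0 (fun t ht => ne_of_gt ht))
  have hev : ∀ᶠ t in nhdsWithin (0:ℝ) (Set.Ioi 0), slope φ 0 t ≤ f y - f x := by
    filter_upwards [Ioc_mem_nhdsGT_of_mem (Set.mem_Ico.mpr ⟨le_refl (0:ℝ), one_pos⟩)] with t ht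
    have h01 : (0:ℝ) < t ∧ t ≤ 1 := ht
    have hcv := hconv.2 (Set.mem_univ x) (Set.mem_univ y)
      (by linarith [h01.2] : (0:ℝ) ≤ 1 - t) (le_of_lt h01.1) (by ring)
    have he : (1 - t) • x + t • y = x + t • (y - x) := by module
    rw [he] at hcv
    have hφ0 : φ 0 = f x := by simp [hφ]
    have h2 : φ t - φ 0 ≤ t * (f y - f x) := by
      rw [hφ0]; simp only [hφ, smul_eq_mul] at hcv ⊢; nlinarith [hcv]
    rw [slope_def_field, sub_zero, div_le_iff₀ h01.1]
    linarith
  linarith [le_of_tendsto hslope hev]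

private lemma wcs {n : ℕ} (L : Fin n → ℝ) (hL : ∀ i, 0 < L i) (a b : Fin n → ℝ) :
    ∑ i, a i * b i ≤ Real.sqrt (∑ i, a i ^ 2 / L i) * Real.sqrt (∑ i, L i * b i ^ 2) := by
  have h := Real.sum_mul_le_sqrt_mul_sqrt Finset.univ (fun i => a i / Real.sqrt (L i))
      (fun i => Real.sqrt (L i) * b i)
  have e1 : ∑ i, a i / Real.sqrt (L i) * (Real.sqrt (L i) * b i) = ∑ i, a i * b i :=
    Finset.sum_congr rfl fun i _ => by
      have h0 : Real.sqrt (L i) ≠ 0 := ne_of_gt (Real.sqrt_pos.2 (hL i))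
      field_simp
  have e2 : ∑ i, (a i / Real.sqrt (L i)) ^ 2 = ∑ i, a i ^ 2 / L i :=
    Finset.sum_congr rfl fun i _ => by rw [div_pow, Real.sq_sqrt (hL i).le]
  have e3 : ∑ i, (Real.sqrt (L i) * b i) ^ 2 = ∑ i, L i * b i ^ 2 :=
    Finset.sum_congr rfl fun i _ => by rw [mul_pow, Real.sq_sqrt (hL i).le]
  rw [e1, e2, e3] at h
  exact h

private lemma sum_expand {n : ℕ} (L : Fin n → ℝ) (a b : Fin n → ℝ) (t : ℝ) :
    ∑ i, L i * (a i + t * b i) ^ 2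
      = ∑ i, L i * a i ^ 2 + t * (2 * ∑ i, L i * (a i * b i)) + t ^ 2 * ∑ i, L i * b i ^ 2 := by
  rw [Finset.mul_sum, Finset.mul_sum, Finset.mul_sum, ← Finset.sum_add_distrib,
    ← Finset.sum_add_distrib]
  exact Finset.sum_congr rfl fun i _ => by ring

section aux

variable {n : ℕ} (L : Fin n → ℝ) (hL : ∀ i, 0 < L i)
  (f : EuclideanSpace ℝ (Fin n) → ℝ) (f' : EuclideanSpace ℝ (Fin n) → EuclideanSpace ℝ (Fin n))
  (hf' : ∀ x, HasGradientAt f (f' x) x)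
  (hfconv : ConvexOn ℝ Set.univ f)
  (hsmooth : ∀ x y, f x ≤ f y + ⟪f' y, x - y⟫ + (1 / 2) * ∑ i, L i * (x i - y i) ^ 2)

private lemma inner_sum_eq (a b : EuclideanSpace ℝ (Fin n)) : ⟪a, b⟫ = ∑ i, a i * b i := by
  simp [PiLp.inner_apply, RCLike.inner_apply]
  exact Finset.sum_congr rfl fun i _ => mul_comm _ _

include hL hf' hfconv hsmooth in
private lemma smooth_lower (u w : EuclideanSpace ℝ (Fin n)) :
    f w + (∑ i, f' w i * (u i - w i)) + (1 / 2) * ∑ i, (f' u i - f' w i) ^ 2 / L i ≤ f u := by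
  set z : EuclideanSpace ℝ (Fin n) :=
    u - (WithLp.equiv 2 (Fin n → ℝ)).symm (fun i => (f' u i - f' w i) / L i) with hz
  have hzi : ∀ i, z i = u i - (f' u i - f' w i) / L i := fun i => by
    rw [hz]; simp
  have h1 := convex_grad_ineq hfconv (hf' w) z
  have h2 := hsmooth z u
  rw [inner_sum_eq] at h1 h2
  simp only [PiLp.sub_apply] at h1 h2
  have e1 : ∑ i, f' w i * (z i - w i)
      = ∑ i, f' w i * (u i - w i) - ∑ i, f' w i * ((f' u i - f' w i) / L i) := by
    rw [← Finset.sum_sub_distrib]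
    exact Finset.sum_congr rfl fun i _ => by rw [hzi]; ring
  have e2 : ∑ i, f' u i * (z i - u i) = -∑ i, f' u i * ((f' u i - f' w i) / L i) := by
    rw [← Finset.sum_neg_distrib]
    exact Finset.sum_congr rfl fun i _ => by rw [hzi]; ring
  have e3 : ∑ i, L i * (z i - u i) ^ 2 = ∑ i, (f' u i - f' w i) ^ 2 / L i :=
    Finset.sum_congr rfl fun i _ => by
      rw [hzi]
      have h0 : L i ≠ 0 := (hL i).ne'
      field_simp
      ring
  have e4 : ∑ i, f' u i * ((f' u i - f' w i) / L i) - ∑ i, f' w i * ((f' u i - f' w i) / L i)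
      = ∑ i, (f' u i - f' w i) ^ 2 / L i := by
    rw [← Finset.sum_sub_distrib]
    exact Finset.sum_congr rfl fun i _ => by
      have h0 : L i ≠ 0 := (hL i).ne'
      field_simp
  rw [e1] at h1
  rw [e2, e3] at h2
  linarith

include hL hf' hfconv hsmooth in
private lemma grad_diff_sq_le (u w : EuclideanSpace ℝ (Fin n)) :
    ∑ i, (f' u i - f' w i) ^ 2 / L i ≤ ∑ i, L i * (u i - w i) ^ 2 := by
  have ha := smooth_lower L hL f f' hf' hfconv hsmooth u w
  have hb := smooth_lower L hL f f' hf' hfconv hsmooth w u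
  have eS : ∑ i, (f' w i - f' u i) ^ 2 / L i = ∑ i, (f' u i - f' w i) ^ 2 / L i :=
    Finset.sum_congr rfl fun i _ => by ring_nf
  rw [eS] at hb
  have eQ : ∑ i, (f' u i - f' w i) * (u i - w i)
      = -∑ i, f' u i * (w i - u i) - ∑ i, f' w i * (u i - w i) := by
    rw [← Finset.sum_neg_distrib, ← Finset.sum_sub_distrib]
    exact Finset.sum_congr rfl fun i _ => by ring
  have hS : ∑ i, (f' u i - f' w i) ^ 2 / L i ≤ ∑ i, (f' u i - f' w i) * (u i - w i) := by
    rw [eQ]; linarith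
  have hcs := wcs L hL (fun i => f' u i - f' w i) (fun i => u i - w i)
  have hS0 : (0:ℝ) ≤ ∑ i, (f' u i - f' w i) ^ 2 / L i :=
    Finset.sum_nonneg fun i _ => div_nonneg (sq_nonneg _) (hL i).le
  have hR0 : (0:ℝ) ≤ ∑ i, L i * (u i - w i) ^ 2 :=
    Finset.sum_nonneg fun i _ => mul_nonneg (hL i).le (sq_nonneg _)
  have hsS := Real.sq_sqrt hS0
  have hsR := Real.sq_sqrt hR0
  nlinarith [hS, hcs, hsS, hsR, Real.sqrt_nonneg (∑ i, (f' u i - f' w i) ^ 2 / L i),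
    Real.sqrt_nonneg (∑ i, L i * (u i - w i) ^ 2),
    sq_nonneg (Real.sqrt (∑ i, (f' u i - f' w i) ^ 2 / L i)
      - Real.sqrt (∑ i, L i * (u i - w i) ^ 2))]

end aux

set_option maxHeartbeats 1000000 in
theorem stmt_10 {n : ℕ} (L : Fin n → ℝ) (hL : ∀ i, 0 < L i)
    (f : EuclideanSpace ℝ (Fin n) → ℝ) (f' : EuclideanSpace ℝ (Fin n) → EuclideanSpace ℝ (Fin n))
    (hf' : ∀ x, HasGradientAt f (f' x) x)
    (hfconv : ConvexOn ℝ Set.univ f)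
    (hsmooth : ∀ x y, f x ≤ f y + ⟪f' y, x - y⟫ + (1 / 2) * ∑ i, L i * (x i - y i) ^ 2)
    (ψ : EuclideanSpace ℝ (Fin n) → ℝ) (hψ : ConvexOn ℝ Set.univ ψ)
    (F : EuclideanSpace ℝ (Fin n) → ℝ) (hF : ∀ x, F x = f x + ψ x)
    (Fstar : ℝ) (Xstar : Set (EuclideanSpace ℝ (Fin n)))
    (hne : Xstar.Nonempty) (hXstar : Xstar = {x | F x = Fstar}) (hmin : ∀ x, Fstar ≤ F x)
    (x₀ : EuclideanSpace ℝ (Fin n)) (μ : ℝ) (hμ : 0 < μ)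
    (hgrowth : ∀ x, F x ≤ F x₀ → Fstar + μ / 2 * (distL L x Xstar) ^ 2 ≤ F x)
    (T : EuclideanSpace ℝ (Fin n) → EuclideanSpace ℝ (Fin n))
    (hT : ∀ x y, ⟪f' x, T x - x⟫ + (1 / 2) * (∑ i, L i * (T x i - x i) ^ 2) + ψ (T x)
        ≤ ⟪f' x, y - x⟫ + (1 / 2) * (∑ i, L i * (y i - x i) ^ 2) + ψ y) :
    ∀ x, F x ≤ F x₀ →
      F (T x) - Fstar ≤ (8 / μ) * ∑ i, L i * (x i - T x i) ^ 2 := by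
  intro x hx
  haveI : Nonempty ↥Xstar := hne.to_subtype
  -- notation
  set rsq : ℝ := ∑ i, L i * (x i - T x i) ^ 2 with hrsq
  have hrsq0 : 0 ≤ rsq :=
    Finset.sum_nonneg fun i _ => mul_nonneg (hL i).le (sq_nonneg _)
  set r : ℝ := Real.sqrt rsq with hrdef
  have hr0 : 0 ≤ r := Real.sqrt_nonneg _
  have hr : r ^ 2 = rsq := Real.sq_sqrt hrsq0
  -- descent : F (T x) ≤ F x
  have e0 : ⟪f' x, x - x⟫ = (0:ℝ) := by simp
  have e0' : ∑ i, L i * (x i - x i) ^ 2 = (0:ℝ) := by simp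
  have hdesc : f (T x) + ψ (T x) ≤ f x + ψ x := by
    have h1 := hT x x
    have h2 := hsmooth (T x) x
    rw [e0, e0'] at h1
    linarith
  have hFs_le : F (T x) ≤ F x₀ := by
    rw [hF]
    calc f (T x) + ψ (T x) ≤ f x + ψ x := hdesc
      _ = F x := (hF x).symm
      _ ≤ F x₀ := hx
  -- growth at T x
  set d : ℝ := distL L (T x) Xstar with hd
  have hgd : Fstar + μ / 2 * d ^ 2 ≤ F (T x) := hgrowth (T x) hFs_le
  have hd0 : 0 ≤ d := by
    rw [hd]; unfold distL; exact le_ciInf fun y => Real.sqrt_nonneg _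
  have hA0 : 0 ≤ F (T x) - Fstar := by linarith [hmin (T x)]
  -- first-order optimality of T x
  have hopt : ∀ y : EuclideanSpace ℝ (Fin n),
      0 ≤ (∑ i, f' x i * (y i - T x i))
        + (∑ i, L i * ((T x i - x i) * (y i - T x i))) + ψ y - ψ (T x) := by
    intro y
    set K : ℝ := ∑ i, L i * (y i - T x i) ^ 2 with hK
    have hK0 : 0 ≤ K := Finset.sum_nonneg fun i _ => mul_nonneg (hL i).le (sq_nonneg _)
    have key : ∀ t : ℝ, 0 < t → t ≤ 1 →
        0 ≤ t * ((∑ i, f' x i * (y i - T x i))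
          + (∑ i, L i * ((T x i - x i) * (y i - T x i))) + ψ y - ψ (T x)) + t ^ 2 * (K / 2) := by
      intro t ht0 ht1
      set yt : EuclideanSpace ℝ (Fin n) := T x + t • (y - T x) with hyt
      have h1 := hT x yt
      rw [inner_sum_eq, inner_sum_eq] at h1
      simp only [PiLp.sub_apply] at h1
      have hyti : ∀ i, yt i = T x i + t * (y i - T x i) := fun i => by rw [hyt]; simp
      have hi1 : ∑ i, f' x i * (yt i - x i)
          = ∑ i, (f' x i * (T x i - x i) + t * (f' x i * (y i - T x i))) :=
        Finset.sum_congr rfl fun i _ => by rw [hyti]; ring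
      rw [hi1, Finset.sum_add_distrib, ← Finset.mul_sum] at h1
      have hi2 : ∑ i, L i * (yt i - x i) ^ 2
          = ∑ i, L i * ((T x i - x i) + t * (y i - T x i)) ^ 2 :=
        Finset.sum_congr rfl fun i _ => by rw [hyti]; ring_nf
      rw [hi2, sum_expand L (fun i => T x i - x i) (fun i => y i - T x i) t] at h1
      have hyt2 : yt = (1 - t) • T x + t • y := by rw [hyt]; module
      have hcv := hψ.2 (Set.mem_univ (T x)) (Set.mem_univ y)
        (by linarith : (0:ℝ) ≤ 1 - t) ht0.le (by ring)
      rw [← hyt2, smul_eq_mul, smul_eq_mul] at hcv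
      rw [hK]
      linarith
    by_contra hB
    push_neg at hB
    set B : ℝ := (∑ i, f' x i * (y i - T x i))
      + (∑ i, L i * ((T x i - x i) * (y i - T x i))) + ψ y - ψ (T x) with hBdef
    have ht0 : 0 < min 1 ((-B) / (K + 1)) :=
      lt_min one_pos (div_pos (by linarith) (by linarith))
    have ht1 : min 1 ((-B) / (K + 1)) ≤ 1 := min_le_left _ _
    have htK : min 1 ((-B) / (K + 1)) * (K + 1) ≤ -B := by
      have h := min_le_right 1 ((-B) / (K + 1))
      rw [← le_div_iff₀ (by linarith : (0:ℝ) < K + 1)]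
      exact h
    have hkey := key _ ht0 ht1
    nlinarith [hkey, mul_pos ht0 (by linarith : (0:ℝ) < -B), hK0, ht0, ht1,
      mul_le_mul_of_nonneg_left htK ht0.le]
  -- subgradient inequality
  have hsub : ∀ y : EuclideanSpace ℝ (Fin n),
      f (T x) + ψ (T x) + (∑ i, (f' (T x) i - f' x i) * (y i - T x i))
        + (∑ i, L i * ((x i - T x i) * (y i - T x i))) ≤ f y + ψ y := by
    intro y
    have h1 := convex_grad_ineq hfconv (hf' (T x)) y
    rw [inner_sum_eq] at h1
    simp only [PiLp.sub_apply] at h1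
    have h2 := hopt y
    have e5 : ∑ i, (f' (T x) i - f' x i) * (y i - T x i)
        = ∑ i, f' (T x) i * (y i - T x i) - ∑ i, f' x i * (y i - T x i) := by
      rw [← Finset.sum_sub_distrib]
      exact Finset.sum_congr rfl fun i _ => by ring
    have e6 : ∑ i, L i * ((x i - T x i) * (y i - T x i))
        = -∑ i, L i * ((T x i - x i) * (y i - T x i)) := by
      rw [← Finset.sum_neg_distrib]
      exact Finset.sum_congr rfl fun i _ => by ring
    rw [e5, e6]
    linarith
  -- distance bound for points of Xstar
  have hbound : ∀ y ∈ Xstar,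
      F (T x) - Fstar ≤ 2 * r * Real.sqrt (∑ i, L i * (T x i - y i) ^ 2) := by
    intro y hy
    have hFy : F y = Fstar := by rw [hXstar] at hy; exact hy
    have h3 := hsub y
    set D : ℝ := Real.sqrt (∑ i, L i * (T x i - y i) ^ 2) with hD
    have hD0 : 0 ≤ D := Real.sqrt_nonneg _
    -- bound 1 : gradient difference term
    have hgl := grad_diff_sq_le L hL f f' hf' hfconv hsmooth (T x) x
    have egl : ∑ i, L i * (T x i - x i) ^ 2 = rsq :=
      Finset.sum_congr rfl fun i _ => by ring_nf
    rw [egl] at hgl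
    have hsqS : Real.sqrt (∑ i, (f' (T x) i - f' x i) ^ 2 / L i) ≤ r := by
      rw [hrdef]
      exact Real.sqrt_le_sqrt hgl
    have hb1 : ∑ i, (f' (T x) i - f' x i) * (T x i - y i) ≤ r * D := by
      have hcs := wcs L hL (fun i => f' (T x) i - f' x i) (fun i => T x i - y i)
      calc ∑ i, (f' (T x) i - f' x i) * (T x i - y i)
          ≤ Real.sqrt (∑ i, (f' (T x) i - f' x i) ^ 2 / L i) * D := hcs
        _ ≤ r * D := mul_le_mul_of_nonneg_right hsqS hD0
    -- bound 2 : prox step term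
    have hb2 : ∑ i, (L i * (x i - T x i)) * (T x i - y i) ≤ r * D := by
      have hcs := wcs L hL (fun i => L i * (x i - T x i)) (fun i => T x i - y i)
      have e7 : ∑ i, (L i * (x i - T x i)) ^ 2 / L i = rsq :=
        Finset.sum_congr rfl fun i _ => by
          have h0 : L i ≠ 0 := (hL i).ne'
          field_simp
      rw [e7] at hcs
      exact hcs
    -- flip signs in h3
    have e8 : ∑ i, (f' (T x) i - f' x i) * (y i - T x i)
        = -∑ i, (f' (T x) i - f' x i) * (T x i - y i) := by
      rw [← Finset.sum_neg_distrib]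
      exact Finset.sum_congr rfl fun i _ => by ring
    have e9 : ∑ i, L i * ((x i - T x i) * (y i - T x i))
        = -∑ i, (L i * (x i - T x i)) * (T x i - y i) := by
      rw [← Finset.sum_neg_distrib]
      exact Finset.sum_congr rfl fun i _ => by ring
    rw [e8, e9] at h3
    have hFTx : F (T x) = f (T x) + ψ (T x) := hF (T x)
    have hFy' : f y + ψ y = Fstar := by rw [← hF y]; exact hFy
    linarith
  -- pass to the infimum
  have hAd : F (T x) - Fstar ≤ 2 * r * d := by
    by_contra h
    push_neg at h
    set ε : ℝ := (F (T x) - Fstar - 2 * r * d) / (2 * r + 1) with hε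
    have hεpos : 0 < ε := div_pos (by linarith) (by linarith)
    have hlt : distL L (T x) Xstar < d + ε := by rw [← hd]; linarith
    unfold distL at hlt
    obtain ⟨y, hy⟩ := exists_lt_of_ciInf_lt hlt
    have hby := hbound y y.2
    have hDle : Real.sqrt (∑ i, L i * (T x i - (y : EuclideanSpace ℝ (Fin n)) i) ^ 2) ≤ d + ε :=
      hy.le
    have : F (T x) - Fstar ≤ 2 * r * (d + ε) := by
      calc F (T x) - Fstar
          ≤ 2 * r * Real.sqrt (∑ i, L i * (T x i - (y : EuclideanSpace ℝ (Fin n)) i) ^ 2) := hby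
        _ ≤ 2 * r * (d + ε) := by
            apply mul_le_mul_of_nonneg_left hDle (by linarith)
    have hεeq : ε * (2 * r + 1) = F (T x) - Fstar - 2 * r * d := by
      rw [hε]; field_simp
    nlinarith [this, hεeq, hεpos, hr0]
  -- final arithmetic
  have h2' : μ * d ^ 2 ≤ 2 * (F (T x) - Fstar) := by linarith
  have h1' : (F (T x) - Fstar) ^ 2 ≤ 4 * rsq * d ^ 2 := by nlinarith [hAd, hA0, hr, hr0, hd0]
  have h5 : μ ^ 2 * (F (T x) - Fstar) ^ 2 ≤ 8 * rsq * (μ * (F (T x) - Fstar)) := by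
    have hm1 := mul_le_mul_of_nonneg_left h1' (sq_nonneg μ)
    have hm2 := mul_le_mul_of_nonneg_left h2' hμ.le
    have hm3 := mul_le_mul_of_nonneg_left hm2 (by positivity : (0:ℝ) ≤ 4 * rsq)
    nlinarith [hm1, hm3]
  rw [div_mul_eq_mul_div, le_div_iff₀ hμ]
  rcases eq_or_lt_of_le (mul_nonneg hμ.le hA0) with hz | hz
  · have hz' : μ * (F (T x) - Fstar) = 0 := hz.symm
    have : F (T x) - Fstar = 0 := by
      rcases mul_eq_zero.mp hz' with h | h
      · exact absurd h hμ.ne'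
      · exact h
    rw [this]
    nlinarith [hrsq0]
  · nlinarith [h5, hz]
end

section
/- For μ₀ > μ_F > 0, set l̄ = ⌈log₂(μ₀/μ_F)⌉ and μ_s = μ₀/2^s, K_s = ⌈2√(e/μ_s) − 1⌉. Then Σ_{s=0}^{l̄−1} K_s ≤ (2√e/(√2 − 1))(√(2/μ_F) − √(1/μ₀)). -/
theorem stmt_12 (μ₀ μF : ℝ) (hμF : 0 < μF) (hμ : μF < μ₀)
    (lbar : ℕ) (hlbar : lbar = ⌈Real.logb 2 (μ₀ / μF)⌉₊)
    (μs : ℕ → ℝ) (hμs : ∀ s, μs s = μ₀ / 2 ^ s)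
    (K : ℕ → ℕ) (hK : ∀ s, K s = ⌈2 * Real.sqrt (Real.exp 1 / μs s) - 1⌉₊) :
    ∑ s ∈ Finset.range lbar, (K s : ℝ)
      ≤ (2 * Real.sqrt (Real.exp 1) / (Real.sqrt 2 - 1)) *
        (Real.sqrt (2 / μF) - Real.sqrt (1 / μ₀)) := by
  have hμ0 : (0:ℝ) < μ₀ := hμF.trans hμ
  have hsq2 : (1:ℝ) < Real.sqrt 2 := by
    rw [show (1:ℝ) = Real.sqrt 1 by simp]
    exact Real.sqrt_lt_sqrt (by norm_num) (by norm_num)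
  have hse : 0 < Real.sqrt (Real.exp 1) := Real.sqrt_pos.mpr (Real.exp_pos 1)
  have hsμ0 : 0 < Real.sqrt μ₀ := Real.sqrt_pos.mpr hμ0
  set c : ℝ := 2 * Real.sqrt (Real.exp 1) / Real.sqrt μ₀ with hc
  have hcpos : 0 < c := by positivity
  -- pointwise bound
  have key : ∀ s, (K s : ℝ) ≤ c * (Real.sqrt 2) ^ s := by
    intro s
    have hx : 2 * Real.sqrt (Real.exp 1 / μs s) = c * (Real.sqrt 2) ^ s := by
      rw [hμs s, hc]
      rw [div_div_eq_mul_div, Real.sqrt_div' _ (by positivity)]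
      rw [show ((2:ℝ)^s) = Real.sqrt 2 ^ s * Real.sqrt 2 ^ s by
        rw [← mul_pow, Real.mul_self_sqrt (by norm_num)]]
      field_simp
      rw [Real.sqrt_mul' _ (by positivity), Real.sqrt_sq (by positivity), mul_comm]
    rw [hK s]
    rcases le_or_gt (2 * Real.sqrt (Real.exp 1 / μs s) - 1) 0 with h | h
    · rw [Nat.ceil_eq_zero.mpr h]
      simp only [Nat.cast_zero, ← hx]
      positivity
    · have := Nat.ceil_lt_add_one (le_of_lt h)
      rw [← hx]; linarith
  have hsum : ∑ s ∈ Finset.range lbar, (K s : ℝ)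
      ≤ c * ((Real.sqrt 2) ^ lbar - 1) / (Real.sqrt 2 - 1) := by
    calc ∑ s ∈ Finset.range lbar, (K s : ℝ)
        ≤ ∑ s ∈ Finset.range lbar, c * (Real.sqrt 2) ^ s :=
          Finset.sum_le_sum fun s _ => key s
      _ = c * ((Real.sqrt 2) ^ lbar - 1) / (Real.sqrt 2 - 1) := by
          rw [← Finset.mul_sum, geom_sum_eq (ne_of_gt hsq2)]
          ring
  -- bound on 2^lbar
  have h2l : (2:ℝ) ^ lbar ≤ 2 * μ₀ / μF := by
    have hL : 0 < Real.logb 2 (μ₀ / μF) :=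
      Real.logb_pos (by norm_num) ((one_lt_div hμF).mpr hμ)
    have hceil : (lbar : ℝ) < Real.logb 2 (μ₀ / μF) + 1 := by
      rw [hlbar]; exact Nat.ceil_lt_add_one hL.le
    have : (2:ℝ) ^ (lbar : ℝ) ≤ (2:ℝ) ^ (Real.logb 2 (μ₀ / μF) + 1) :=
      Real.rpow_le_rpow_of_exponent_le (by norm_num) hceil.le
    rw [Real.rpow_natCast] at this
    rwa [Real.rpow_add (by norm_num), Real.rpow_logb (by norm_num) (by norm_num)
      (by positivity), Real.rpow_one, div_mul_eq_mul_div, mul_comm] at this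
  have hsl : (Real.sqrt 2) ^ lbar ≤ Real.sqrt (2 * μ₀ / μF) := by
    rw [show (Real.sqrt 2) ^ lbar = Real.sqrt ((2:ℝ) ^ lbar) by
      rw [show ((2:ℝ) ^ lbar) = ((Real.sqrt 2)^2) ^ lbar by
        rw [Real.sq_sqrt (by norm_num : (0:ℝ) ≤ 2)],
        ← pow_mul, mul_comm, pow_mul, Real.sqrt_sq (by positivity)]]
    exact Real.sqrt_le_sqrt h2l
  have hstep : c * ((Real.sqrt 2) ^ lbar - 1) / (Real.sqrt 2 - 1)
      ≤ c * (Real.sqrt (2 * μ₀ / μF) - 1) / (Real.sqrt 2 - 1) := by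
    have hd : 0 < Real.sqrt 2 - 1 := by linarith
    apply div_le_div_of_nonneg_right ?_ hd.le |>.trans_eq rfl
    nlinarith [hsl, hcpos]
  have e1 : Real.sqrt (2/μF) = Real.sqrt (2*μ₀/μF) / Real.sqrt μ₀ := by
    rw [← Real.sqrt_div (by positivity)]
    congr 1
    field_simp
  have e2 : Real.sqrt (1/μ₀) = 1 / Real.sqrt μ₀ := by
    rw [Real.sqrt_div (by norm_num) μ₀, Real.sqrt_one]
  have heq : c * (Real.sqrt (2 * μ₀ / μF) - 1) / (Real.sqrt 2 - 1)
      = (2 * Real.sqrt (Real.exp 1) / (Real.sqrt 2 - 1)) *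
        (Real.sqrt (2 / μF) - Real.sqrt (1 / μ₀)) := by
    rw [hc, e1, e2]
    have hd : Real.sqrt 2 - 1 ≠ 0 := by intro h; linarith
    field_simp
  linarith [hsum, hstep, heq.le, heq.ge]
end

section
/- Let Δ_{k} = dist(x_k, X⋆)² be nonnegative reals, and let θ_k ∈ (0,1] satisfy (1−θ_{k+1})/θ_{k+1}² = 1/θ_k² and θ_0 = 1, and μ > 0. If Δ_1 ≤ Δ_0/(1 + μ/θ_0) and Δ_{k+1} ≤ (θ_k Δ_0 + (1−θ_k)Δ_k)/(1 + μ/θ_k) for all k ≥ 1, then Δ_k ≤ Δ_0/(1 + μ/(2θ_{k−1}²)) for all k ≥ 1. -/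
theorem stmt_14 (Δ : ℕ → ℝ) (hnn : ∀ k, 0 ≤ Δ k)
    (θ : ℕ → ℝ) (hθ0 : θ 0 = 1) (hθpos : ∀ k, 0 < θ k) (hθle : ∀ k, θ k ≤ 1)
    (hθrec : ∀ k, (1 - θ (k + 1)) / (θ (k + 1)) ^ 2 = 1 / (θ k) ^ 2)
    (μ : ℝ) (hμ : 0 < μ)
    (h1 : Δ 1 ≤ Δ 0 / (1 + μ / θ 0))
    (hrec : ∀ k ≥ 1, Δ (k + 1) ≤ (θ k * Δ 0 + (1 - θ k) * Δ k) / (1 + μ / θ k)) :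
    ∀ k ≥ 1, Δ k ≤ Δ 0 / (1 + μ / (2 * (θ (k - 1)) ^ 2)) := by
  have hΔ0 : (0:ℝ) ≤ Δ 0 := hnn 0
  intro k hk
  induction k, hk using Nat.le_induction with
  | base =>
    rw [hθ0] at h1 ⊢
    norm_num at h1 ⊢
    calc Δ 1 ≤ Δ 0 / (1 + μ) := h1
      _ ≤ Δ 0 / (1 + μ / 2) := by gcongr <;> linarith
  | succ k hk ih =>
    simp only [Nat.add_sub_cancel] at ih ⊢
    set t := θ k with ht
    have ht0 : 0 < t := hθpos k
    have ht1 : t ≤ 1 := hθle k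
    have h1t : (0:ℝ) ≤ 1 - t := by linarith
    -- relate θ (k-1) to t
    have hkk : k - 1 + 1 = k := Nat.succ_pred_eq_of_pos hk
    have hrel : 1 / (θ (k - 1)) ^ 2 = (1 - t) / t ^ 2 := by
      rw [← hθrec (k - 1), hkk]
    have hθk1 : 0 < θ (k - 1) := hθpos (k - 1)
    have hmu : μ / (2 * (θ (k - 1)) ^ 2) = μ * (1 - t) / (2 * t ^ 2) := by
      have h2 : (θ (k-1))^2 ≠ 0 := by positivity
      have h3 : t^2 ≠ 0 := by positivity
      field_simp at hrel ⊢
      nlinarith [hrel]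
    rw [hmu] at ih
    have ht2 : (0:ℝ) < t ^ 2 := by positivity
    have hA : (0:ℝ) < 1 + μ * (1 - t) / (2 * t ^ 2) := by
      have : 0 ≤ μ * (1 - t) / (2 * t ^ 2) :=
        div_nonneg (mul_nonneg hμ.le h1t) (by positivity)
      linarith
    have hB : (0:ℝ) < 1 + μ / t := by positivity
    have hC : (0:ℝ) < 1 + μ / (2 * t ^ 2) := by positivity
    have step := hrec k hk
    have hmid : Δ (k + 1) ≤ (t * Δ 0 + (1 - t) * (Δ 0 / (1 + μ * (1 - t) / (2 * t ^ 2)))) / (1 + μ / t) := by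
      refine le_trans step ?_
      gcongr
    refine le_trans hmid ?_
    set D := Δ 0 / (1 + μ * (1 - t) / (2 * t ^ 2)) with hDdef
    have hDnn : 0 ≤ D := div_nonneg hΔ0 hA.le
    have hD : D * (1 + μ * (1 - t) / (2 * t ^ 2)) = Δ 0 :=
      div_mul_cancel₀ _ (ne_of_gt hA)
    have hDA : D * (2 * t ^ 2 + μ * (1 - t)) = Δ 0 * (2 * t ^ 2) := by
      have h := hD
      field_simp at h
      linarith [h]
    have hP : (0:ℝ) < 2 * t ^ 2 + μ * (1 - t) := by nlinarith
    -- polynomial core inequality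
    have goal' : (t * Δ 0 + (1 - t) * D) * (2 * t ^ 2 + μ) * t ≤ Δ 0 * (t + μ) * (2 * t ^ 2) := by
      have hsub : t * (1 - t) * (2 * t ^ 2 + μ) * (D * (2 * t ^ 2 + μ * (1 - t)))
          = t * (1 - t) * (2 * t ^ 2 + μ) * (Δ 0 * (2 * t ^ 2)) := by rw [hDA]
      have hfact : 0 ≤ t ^ 2 * (Δ 0 * (μ * (μ * (1 - t) + 2 * t ^ 3))) := by
        have : 0 ≤ μ * (1 - t) + 2 * t ^ 3 := by positivity
        positivity
      nlinarith [hsub, hfact, hP, mul_pos ht0 ht2]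
    rw [div_le_div_iff₀ hB hC]
    have h2t3 : (0:ℝ) < 2 * t ^ 2 * t := by positivity
    rw [← mul_le_mul_iff_of_pos_right h2t3]
    have e1 : (t * Δ 0 + (1 - t) * D) * (1 + μ / (2 * t ^ 2)) * (2 * t ^ 2 * t)
        = (t * Δ 0 + (1 - t) * D) * (2 * t ^ 2 + μ) * t := by
      field_simp
    have e2 : Δ 0 * (1 + μ / t) * (2 * t ^ 2 * t) = Δ 0 * (t + μ) * (2 * t ^ 2) := by
      field_simp
    rw [e1, e2]
    exact goal'
end
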